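/- For two agents, the proportional share over additive valuations is self-maximizing: for any additive valuations v, v' on a finite set M, min{ v(S) : v(S) ≥ v(M)/2 } ≥ min{ v(S) : v'(S) ≥ v'(M)/2 }. -/

import Mathlib

/-- For two agents, the proportional share over additive valuations is self-maximizing:
for any additive valuations given by item values `w` (true) and `w'` (report),
`min { v S : v S ≥ v M / 2 } ≥ min { v S : v' S ≥ v' M / 2 }`. -/
theorem proportional_share_self_maximizing_two_agents {M : Type*} [Fintype M] [DecidableEq M]
    (w w' : M → ℝ) (hw : ∀ e, 0 ≤ w e) (hw' : ∀ e, 0 ≤ w' e) :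
    sInf ((fun S : Finset M => ∑ e ∈ S, w e) ''
        {S : Finset M | (∑ e, w' e) / 2 ≤ ∑ e ∈ S, w' e})
      ≤ sInf ((fun S : Finset M => ∑ e ∈ S, w e) ''
        {S : Finset M | (∑ e, w e) / 2 ≤ ∑ e ∈ S, w e}) := by
  have hbdd : BddBelow ((fun S : Finset M => ∑ e ∈ S, w e) ''
      {S : Finset M | (∑ e, w' e) / 2 ≤ ∑ e ∈ S, w' e}) := by
    refine ⟨0, ?_⟩
    rintro x ⟨S, _, rfl⟩
    exact Finset.sum_nonneg fun e _ => hw e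
  apply le_csInf
  · refine ⟨∑ e, w e, Finset.univ, ?_, rfl⟩
    have h0 : (0:ℝ) ≤ ∑ e, w e := Finset.sum_nonneg fun e _ => hw e
    simp only [Set.mem_setOf_eq]
    linarith
  · rintro x ⟨S, hS, rfl⟩
    simp only [Set.mem_setOf_eq] at hS
    by_cases h : (∑ e, w' e) / 2 ≤ ∑ e ∈ S, w' e
    · exact csInf_le hbdd ⟨S, h, rfl⟩
    · have hsc' := Finset.sum_add_sum_compl S w'
      have h' : (∑ e, w' e) / 2 ≤ ∑ e ∈ Sᶜ, w' e := by linarith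
      refine le_trans (csInf_le hbdd ⟨Sᶜ, h', rfl⟩) ?_
      have hsc := Finset.sum_add_sum_compl S w
      linarith
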